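/- On the open set {u₁ ≠ u₂} ⊂ ℝ⁴ define x₃ = ((p₁−p₂)/(u₁−u₂))² − u₁ − u₂ and y₃ = p₁ + ((p₁−p₂)/(u₁−u₂))·(x₃ − u₁). Then {x₃, y₃} = −1 identically with respect to the canonical Poisson bracket. -/

import Mathlib

/-- The canonical Poisson bracket on `ℝ⁴` with coordinates `(u₁,u₂,p₁,p₂)`. -/
noncomputable def poissonBracket (f g : ℝ → ℝ → ℝ → ℝ → ℝ) (u₁ u₂ p₁ p₂ : ℝ) : ℝ :=
    deriv (fun x => f x u₂ p₁ p₂) u₁ * deriv (fun y => g u₁ u₂ y p₂) p₁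
  + deriv (fun x => f u₁ x p₁ p₂) u₂ * deriv (fun y => g u₁ u₂ p₁ y) p₂
  - deriv (fun y => f u₁ u₂ y p₂) p₁ * deriv (fun x => g x u₂ p₁ p₂) u₁
  - deriv (fun y => f u₁ u₂ p₁ y) p₂ * deriv (fun x => g u₁ x p₁ p₂) u₂

/-- Abscissa of the third intersection point. -/
noncomputable def x₃Fun (x₁ x₂ y₁ y₂ : ℝ) : ℝ :=
  ((y₁ - y₂) / (x₁ - x₂)) ^ 2 - x₁ - x₂

/-- Ordinate of the third intersection point. -/
noncomputable def y₃Fun (x₁ x₂ y₁ y₂ : ℝ) : ℝ :=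
  y₁ + ((y₁ - y₂) / (x₁ - x₂)) * (x₃Fun x₁ x₂ y₁ y₂ - x₁)

/-- The coordinates of the third intersection point are canonically conjugate:
`{x₃, y₃} = −1` identically on the open set `{u₁ ≠ u₂}`. -/
theorem x₃_y₃_bracket (u₁ u₂ p₁ p₂ : ℝ) (h : u₁ ≠ u₂) :
    poissonBracket x₃Fun y₃Fun u₁ u₂ p₁ p₂ = -1 := by
  have hd : u₁ - u₂ ≠ 0 := sub_ne_zero.mpr h
  set s : ℝ := (p₁ - p₂) / (u₁ - u₂) with hs
  set X : ℝ := s ^ 2 - u₁ - u₂ with hX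
  -- derivatives with respect to u₁
  have hs1 : HasDerivAt (fun x => (p₁ - p₂) / (x - u₂))
      ((0 * (u₁ - u₂) - (p₁ - p₂) * 1) / (u₁ - u₂) ^ 2) u₁ :=
    (hasDerivAt_const u₁ (p₁ - p₂)).div ((hasDerivAt_id u₁).sub_const u₂) hd
  have hX1 : HasDerivAt (fun x => x₃Fun x u₂ p₁ p₂)
      ((2 : ℕ) * ((p₁ - p₂) / (u₁ - u₂)) ^ 1 *
        ((0 * (u₁ - u₂) - (p₁ - p₂) * 1) / (u₁ - u₂) ^ 2) - 1) u₁ := by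
    have := ((hs1.pow 2).sub (hasDerivAt_id u₁)).sub_const u₂
    simpa [x₃Fun] using this
  have hY1 : HasDerivAt (fun x => y₃Fun x u₂ p₁ p₂)
      (0 + (((0 * (u₁ - u₂) - (p₁ - p₂) * 1) / (u₁ - u₂) ^ 2) * (X - u₁) +
        s * (((2 : ℕ) * ((p₁ - p₂) / (u₁ - u₂)) ^ 1 *
          ((0 * (u₁ - u₂) - (p₁ - p₂) * 1) / (u₁ - u₂) ^ 2) - 1) - 1))) u₁ := by
    have := (hasDerivAt_const u₁ p₁).add (hs1.mul (hX1.sub (hasDerivAt_id u₁)))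
    simpa [y₃Fun, x₃Fun, hs, hX, Pi.add_def, Pi.sub_def, Pi.mul_def] using this
  -- derivatives with respect to u₂
  have hs2 : HasDerivAt (fun x => (p₁ - p₂) / (u₁ - x))
      ((0 * (u₁ - u₂) - (p₁ - p₂) * (0 - 1)) / (u₁ - u₂) ^ 2) u₂ :=
    (hasDerivAt_const u₂ (p₁ - p₂)).div
      ((hasDerivAt_const u₂ u₁).sub (hasDerivAt_id u₂)) hd
  have hX2 : HasDerivAt (fun x => x₃Fun u₁ x p₁ p₂)
      ((2 : ℕ) * ((p₁ - p₂) / (u₁ - u₂)) ^ 1 *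
        ((0 * (u₁ - u₂) - (p₁ - p₂) * (0 - 1)) / (u₁ - u₂) ^ 2) - 1) u₂ := by
    have := (((hs2.pow 2).sub_const u₁).sub (hasDerivAt_id u₂))
    simpa [x₃Fun, Pi.sub_def] using this
  have hY2 : HasDerivAt (fun x => y₃Fun u₁ x p₁ p₂)
      (0 + (((0 * (u₁ - u₂) - (p₁ - p₂) * (0 - 1)) / (u₁ - u₂) ^ 2) * (X - u₁) +
        s * ((2 : ℕ) * ((p₁ - p₂) / (u₁ - u₂)) ^ 1 *
          ((0 * (u₁ - u₂) - (p₁ - p₂) * (0 - 1)) / (u₁ - u₂) ^ 2) - 1))) u₂ := by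
    have := (hasDerivAt_const u₂ p₁).add (hs2.mul (hX2.sub_const u₁))
    simpa [y₃Fun, x₃Fun, hs, hX, Pi.add_def, Pi.sub_def, Pi.mul_def] using this
  -- derivatives with respect to p₁
  have hs3 : HasDerivAt (fun y => (y - p₂) / (u₁ - u₂)) ((1 : ℝ) / (u₁ - u₂)) p₁ := by
    simpa using ((hasDerivAt_id p₁).sub_const p₂).div_const (u₁ - u₂)
  have hX3 : HasDerivAt (fun y => x₃Fun u₁ u₂ y p₂)
      ((2 : ℕ) * ((p₁ - p₂) / (u₁ - u₂)) ^ 1 * ((1 : ℝ) / (u₁ - u₂))) p₁ := by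
    have := (((hs3.pow 2).sub_const u₁).sub_const u₂)
    simpa [x₃Fun] using this
  have hY3 : HasDerivAt (fun y => y₃Fun u₁ u₂ y p₂)
      (1 + (((1 : ℝ) / (u₁ - u₂)) * (X - u₁) +
        s * ((2 : ℕ) * ((p₁ - p₂) / (u₁ - u₂)) ^ 1 * ((1 : ℝ) / (u₁ - u₂))))) p₁ := by
    have := (hasDerivAt_id p₁).add (hs3.mul (hX3.sub_const u₁))
    simpa [y₃Fun, x₃Fun, hs, hX, Pi.add_def, Pi.sub_def, Pi.mul_def] using this
  -- derivatives with respect to p₂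
  have hs4 : HasDerivAt (fun y => (p₁ - y) / (u₁ - u₂)) ((0 - 1) / (u₁ - u₂)) p₂ := by
    simpa using ((hasDerivAt_const p₂ p₁).sub (hasDerivAt_id p₂)).div_const (u₁ - u₂)
  have hX4 : HasDerivAt (fun y => x₃Fun u₁ u₂ p₁ y)
      ((2 : ℕ) * ((p₁ - p₂) / (u₁ - u₂)) ^ 1 * ((0 - 1) / (u₁ - u₂))) p₂ := by
    have := (((hs4.pow 2).sub_const u₁).sub_const u₂)
    simpa [x₃Fun] using this
  have hY4 : HasDerivAt (fun y => y₃Fun u₁ u₂ p₁ y)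
      (0 + (((0 - 1) / (u₁ - u₂)) * (X - u₁) +
        s * ((2 : ℕ) * ((p₁ - p₂) / (u₁ - u₂)) ^ 1 * ((0 - 1) / (u₁ - u₂))))) p₂ := by
    have := (hasDerivAt_const p₂ p₁).add (hs4.mul (hX4.sub_const u₁))
    simpa [y₃Fun, x₃Fun, hs, hX, Pi.add_def, Pi.sub_def, Pi.mul_def] using this
  rw [poissonBracket, hX1.deriv, hX2.deriv, hX3.deriv, hX4.deriv,
    hY1.deriv, hY2.deriv, hY3.deriv, hY4.deriv]
  simp only [hX, hs]
  field_simp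
  ring
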